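/- Let n ≥ 1, 1 < p < ∞, and let M be a family of Borel measures on ℝⁿ with mod_p M < ∞, and let ρ : ℝⁿ → [0,∞) be a p-weakly admissible Borel minimizer, i.e. mod_p M = ∫_{ℝⁿ} ρ^p dH^n. Then for every p-integrable p-weakly admissible Borel function φ : ℝⁿ → [0,∞) one has mod_p M ≤ ∫_{ℝⁿ} φ ρ^{p-1} dH^n. -/

import Mathlib

open MeasureTheory Filter ENNReal Topology

/-- The `p`-modulus of a family `M` of measures, with respect to a reference measure `μ`. -/
noncomputable def modulus {X : Type*} [MeasurableSpace X] (p : ℝ) (μ : Measure X)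
    (M : Set (Measure X)) : ℝ≥0∞ :=
  ⨅ (ρ : X → ℝ) (_ : Measurable ρ) (_ : ∀ x, 0 ≤ ρ x)
    (_ : ∀ ν ∈ M, 1 ≤ ∫⁻ x, ENNReal.ofReal (ρ x) ∂ν),
    ∫⁻ x, ENNReal.ofReal (ρ x) ^ p ∂μ

/-- A nonnegative Borel function `ρ` is `p`-weakly admissible for `M` (w.r.t. `μ`) if there is a
subfamily `N ⊆ M` of `p`-modulus zero such that `∫ ρ dν ≥ 1` for all `ν ∈ M \ N`. -/
def WeaklyAdmissible {X : Type*} [MeasurableSpace X] (p : ℝ) (μ : Measure X)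
    (M : Set (Measure X)) (ρ : X → ℝ) : Prop :=
  ∃ N ⊆ M, modulus p μ N = 0 ∧ ∀ ν ∈ M \ N, 1 ≤ ∫⁻ x, ENNReal.ofReal (ρ x) ∂ν

/-- The standard (normalized) `d`-dimensional Hausdorff measure: Mathlib's (unnormalized)
Hausdorff measure multiplied by the isodiametric normalization constant `ω_d / 2^d`, where
`ω_d` is the volume of the Euclidean unit `d`-ball. With this normalization the
`n`-dimensional Hausdorff measure on `ℝⁿ` equals Lebesgue measure. -/
noncomputable def stdHausdorff (d : ℕ) (X : Type*) [EMetricSpace X] [MeasurableSpace X]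
    [BorelSpace X] : Measure X :=
  (volume (Metric.ball (0 : EuclideanSpace ℝ (Fin d)) 1) / 2 ^ d) • μH[(d : ℝ)]

section Aux

variable {X : Type*} [MeasurableSpace X] {μ : Measure X} {p : ℝ}

lemma modulus_le_admissible {M : Set (Measure X)} {f : X → ℝ} (hf : Measurable f)
    (h0 : ∀ x, 0 ≤ f x) (hadm : ∀ ν ∈ M, 1 ≤ ∫⁻ x, ENNReal.ofReal (f x) ∂ν) :
    modulus p μ M ≤ ∫⁻ x, ENNReal.ofReal (f x) ^ p ∂μ :=
  iInf_le_of_le f <| iInf_le_of_le hf <| iInf_le_of_le h0 <| iInf_le _ hadm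

lemma exists_admissible_lt {N : Set (Measure X)} (h : modulus p μ N = 0) {ε : ℝ≥0∞}
    (hε : 0 < ε) : ∃ g : X → ℝ, Measurable g ∧ (∀ x, 0 ≤ g x) ∧
      (∀ ν ∈ N, 1 ≤ ∫⁻ x, ENNReal.ofReal (g x) ∂ν) ∧
      ∫⁻ x, ENNReal.ofReal (g x) ^ p ∂μ < ε := by
  have h2 : modulus p μ N < ε := h ▸ hε
  unfold modulus at h2
  simp only [iInf_lt_iff] at h2
  obtain ⟨g, hg, h0, hadm, hlt⟩ := h2
  exact ⟨g, hg, h0, hadm, hlt⟩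

lemma modulus_le_weak (hp : 1 < p) {M N : Set (Measure X)} {f : X → ℝ}
    (hf : Measurable f) (h0 : ∀ x, 0 ≤ f x) (hN : modulus p μ N = 0)
    (hadm : ∀ ν ∈ M \ N, 1 ≤ ∫⁻ x, ENNReal.ofReal (f x) ∂ν) :
    modulus p μ M ≤ ∫⁻ x, ENNReal.ofReal (f x) ^ p ∂μ := by
  have hp0 : (0 : ℝ) < p := lt_trans one_pos hp
  set A := ∫⁻ x, ENNReal.ofReal (f x) ^ p ∂μ with hA
  by_cases hAtop : A = ⊤
  · simp [hAtop]
  have key : (modulus p μ M) ^ (1 / p) ≤ A ^ (1 / p) := by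
    refine ENNReal.le_of_forall_pos_le_add fun ε hε _ => ?_
    have hεp : (0 : ℝ≥0∞) < (ε : ℝ≥0∞) ^ p :=
      ENNReal.rpow_pos (by exact_mod_cast hε) coe_ne_top
    obtain ⟨g, hg, hg0, hgadm, hglt⟩ := exists_admissible_lt hN hεp
    have hsum : ∀ ν ∈ M, 1 ≤ ∫⁻ x, ENNReal.ofReal (f x + g x) ∂ν := by
      intro ν hν
      by_cases hνN : ν ∈ N
      · calc (1 : ℝ≥0∞) ≤ ∫⁻ x, ENNReal.ofReal (g x) ∂ν := hgadm ν hνN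
          _ ≤ ∫⁻ x, ENNReal.ofReal (f x + g x) ∂ν := by
              refine lintegral_mono fun x => ?_
              rw [ENNReal.ofReal_add (h0 x) (hg0 x)]; exact le_add_self
      · calc (1 : ℝ≥0∞) ≤ ∫⁻ x, ENNReal.ofReal (f x) ∂ν := hadm ν ⟨hν, hνN⟩
          _ ≤ ∫⁻ x, ENNReal.ofReal (f x + g x) ∂ν := by
              refine lintegral_mono fun x => ?_
              rw [ENNReal.ofReal_add (h0 x) (hg0 x)]; exact le_self_add
    have h1 : modulus p μ M ≤ ∫⁻ x, ENNReal.ofReal (f x + g x) ^ p ∂μ :=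
      modulus_le_admissible (hf.add hg) (fun x => add_nonneg (h0 x) (hg0 x)) hsum
    have h2 : (∫⁻ x, ENNReal.ofReal (f x + g x) ^ p ∂μ) ^ (1 / p) ≤
        A ^ (1 / p) + (∫⁻ x, ENNReal.ofReal (g x) ^ p ∂μ) ^ (1 / p) := by
      have h2' := ENNReal.lintegral_Lp_add_le (μ := μ)
        (f := fun x => ENNReal.ofReal (f x)) (g := fun x => ENNReal.ofReal (g x))
        hf.ennreal_ofReal.aemeasurable hg.ennreal_ofReal.aemeasurable hp.le
      have heq : (∫⁻ a, ((fun x => ENNReal.ofReal (f x)) + fun x => ENNReal.ofReal (g x)) a ^ p ∂μ)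
          = ∫⁻ x, ENNReal.ofReal (f x + g x) ^ p ∂μ :=
        lintegral_congr fun x => by
          simp [ENNReal.ofReal_add (h0 x) (hg0 x)]
      rwa [heq] at h2'
    have h3 : (∫⁻ x, ENNReal.ofReal (g x) ^ p ∂μ) ^ (1 / p) ≤ (ε : ℝ≥0∞) := by
      calc (∫⁻ x, ENNReal.ofReal (g x) ^ p ∂μ) ^ (1 / p)
          ≤ ((ε : ℝ≥0∞) ^ p) ^ (1 / p) := ENNReal.rpow_le_rpow hglt.le (by positivity)
        _ = (ε : ℝ≥0∞) := by
            rw [one_div, ENNReal.rpow_rpow_inv hp0.ne']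
    calc (modulus p μ M) ^ (1 / p)
        ≤ (∫⁻ x, ENNReal.ofReal (f x + g x) ^ p ∂μ) ^ (1 / p) :=
          ENNReal.rpow_le_rpow h1 (by positivity)
      _ ≤ A ^ (1 / p) + (∫⁻ x, ENNReal.ofReal (g x) ^ p ∂μ) ^ (1 / p) := h2
      _ ≤ A ^ (1 / p) + ε := add_le_add le_rfl h3
  have h4 := ENNReal.rpow_le_rpow key hp0.le
  rwa [one_div, ENNReal.rpow_inv_rpow hp0.ne', ENNReal.rpow_inv_rpow hp0.ne'] at h4

lemma modulus_union_zero (hp : 1 < p) {N₁ N₂ : Set (Measure X)}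
    (h1 : modulus p μ N₁ = 0) (h2 : modulus p μ N₂ = 0) :
    modulus p μ (N₁ ∪ N₂) = 0 := by
  refine le_antisymm (ENNReal.le_of_forall_pos_le_add fun ε hε _ => ?_) (by positivity)
  rw [zero_add]
  obtain ⟨g, hg, hg0, hgadm, hglt⟩ := exists_admissible_lt h2
    (show (0 : ℝ≥0∞) < ε by exact_mod_cast hε)
  exact le_trans
    (modulus_le_weak hp hg hg0 h1 fun ν hν => hgadm ν (hν.1.resolve_left hν.2)) hglt.le

lemma key_pointwise (hp : 1 < p) {t a b : ℝ} (ht0 : 0 < t) (ht1 : t < 1)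
    (ha : 0 ≤ a) (hb : 0 ≤ b) :
    (1 + t * (p - 1)) * ((1 - t) * a + t * b) ^ p ≤
      (1 - t) * a ^ p + (p * t) * (b * ((1 - t) * a + t * b) ^ (p - 1)) := by
  have hp0 : (0 : ℝ) < p := lt_trans one_pos hp
  set c : ℝ := (1 - t) * a + t * b with hcdef
  have hc : 0 ≤ c := add_nonneg (mul_nonneg (by linarith) ha) (mul_nonneg ht0.le hb)
  rcases eq_or_lt_of_le hc with hc0 | hcpos
  · rw [← hc0, Real.zero_rpow hp0.ne', Real.zero_rpow (by linarith : p - 1 ≠ 0)]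
    have : 0 ≤ (1 - t) * a ^ p := mul_nonneg (by linarith) (Real.rpow_nonneg ha p)
    nlinarith
  · have hq : p.HolderConjugate (p / (p - 1)) := Real.HolderConjugate.conjExponent hp
    have hY : a * c ^ (p - 1) ≤ a ^ p / p + (c ^ (p - 1)) ^ (p / (p - 1)) / (p / (p - 1)) :=
      Real.young_inequality_of_nonneg ha (Real.rpow_nonneg hc _) hq
    have hPow : (c ^ (p - 1)) ^ (p / (p - 1)) = c ^ p := by
      rw [← Real.rpow_mul hc]
      congr 1
      rw [mul_comm (p - 1), div_mul_cancel₀ _ (by linarith : p - 1 ≠ 0)]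
    rw [hPow] at hY
    have hY2 : p * (a * c ^ (p - 1)) ≤ a ^ p + (p - 1) * c ^ p := by
      have h := mul_le_mul_of_nonneg_left hY hp0.le
      calc p * (a * c ^ (p - 1)) ≤ p * (a ^ p / p + c ^ p / (p / (p - 1))) := h
        _ = a ^ p + (p - 1) * c ^ p := by
            field_simp
    have hC : c ^ p = (1 - t) * (a * c ^ (p - 1)) + t * (b * c ^ (p - 1)) := by
      have h1 : c ^ p = c * c ^ (p - 1) := by
        rw [show p = 1 + (p - 1) by ring, Real.rpow_add hcpos, Real.rpow_one]
        ring_nf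
      rw [h1, hcdef]
      ring
    have hC' : p * c ^ p = p * ((1 - t) * (a * c ^ (p - 1))) + p * (t * (b * c ^ (p - 1))) := by
      rw [hC]; ring
    have h4 : (1 - t) * (p * (a * c ^ (p - 1))) ≤ (1 - t) * (a ^ p + (p - 1) * c ^ p) :=
      mul_le_mul_of_nonneg_left hY2 (by linarith)
    nlinarith [h4, hC']

end Aux

/-- If `ρ` is a `p`-weakly admissible minimizer for `mod_p M < ∞`, then for every `p`-integrable
`p`-weakly admissible `φ` one has `mod_p M ≤ ∫ φ ρ^{p-1} dHⁿ`. -/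
theorem modulus_le_lintegral_mul_minimizer_pow (n : ℕ) (hn : 1 ≤ n) (p : ℝ) (hp : 1 < p)
    (M : Set (Measure (EuclideanSpace ℝ (Fin n))))
    (hfin : modulus p (stdHausdorff n (EuclideanSpace ℝ (Fin n))) M < ⊤)
    (ρ : EuclideanSpace ℝ (Fin n) → ℝ) (hρmeas : Measurable ρ) (hρpos : ∀ x, 0 ≤ ρ x)
    (hρweak : WeaklyAdmissible p (stdHausdorff n (EuclideanSpace ℝ (Fin n))) M ρ)
    (hρmin : modulus p (stdHausdorff n (EuclideanSpace ℝ (Fin n))) M = ∫⁻ x, ENNReal.ofReal (ρ x) ^ p ∂(stdHausdorff n (EuclideanSpace ℝ (Fin n))))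
    (φ : EuclideanSpace ℝ (Fin n) → ℝ) (hφmeas : Measurable φ) (hφpos : ∀ x, 0 ≤ φ x)
    (hφLp : MemLp φ (ENNReal.ofReal p) (stdHausdorff n (EuclideanSpace ℝ (Fin n))))
    (hφweak : WeaklyAdmissible p (stdHausdorff n (EuclideanSpace ℝ (Fin n))) M φ) :
    modulus p (stdHausdorff n (EuclideanSpace ℝ (Fin n))) M ≤
      ∫⁻ x, ENNReal.ofReal (φ x) * ENNReal.ofReal (ρ x) ^ (p - 1) ∂(stdHausdorff n (EuclideanSpace ℝ (Fin n))) := by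
  set μ := stdHausdorff n (EuclideanSpace ℝ (Fin n)) with hμdef
  obtain ⟨N₁, hN₁M, hN₁, hρadm⟩ := hρweak
  obtain ⟨N₂, hN₂M, hN₂, hφadm⟩ := hφweak
  have hp0 : (0 : ℝ) < p := lt_trans one_pos hp
  have hp1 : (0 : ℝ) ≤ p - 1 := by linarith
  have hN : modulus p μ (N₁ ∪ N₂) = 0 := modulus_union_zero hp hN₁ hN₂
  have hRmeas : Measurable fun x => ENNReal.ofReal (ρ x) := hρmeas.ennreal_ofReal
  have hPmeas : Measurable fun x => ENNReal.ofReal (φ x) := hφmeas.ennreal_ofReal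
  have hAfin : (∫⁻ x, ENNReal.ofReal (ρ x) ^ p ∂μ) ≠ ⊤ := by
    rw [← hρmin]; exact hfin.ne
  have hΦfin : (∫⁻ x, ENNReal.ofReal (φ x) ^ p ∂μ) ≠ ⊤ := by
    have h1 := hφLp.2
    rw [eLpNorm_eq_lintegral_rpow_enorm_toReal
      (by simp [ENNReal.ofReal_eq_zero, not_le, hp0] : ENNReal.ofReal p ≠ 0)
      ENNReal.ofReal_ne_top, ENNReal.toReal_ofReal hp0.le] at h1
    have h2 : (∫⁻ x, ‖φ x‖ₑ ^ p ∂μ) = ∫⁻ x, ENNReal.ofReal (φ x) ^ p ∂μ :=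
      lintegral_congr fun x => by rw [Real.enorm_eq_ofReal (hφpos x)]
    rw [h2] at h1
    exact ((ENNReal.rpow_lt_top_iff_of_pos (by positivity)).mp h1).ne
  -- main step: for every `t ∈ (0,1)`, `mod ≤ ∫ φ ρₜ^{p-1}`
  have main : ∀ t : ℝ, 0 < t → t < 1 →
      modulus p μ M ≤ ∫⁻ x, ENNReal.ofReal (φ x) *
        ENNReal.ofReal ((1 - t) * ρ x + t * φ x) ^ (p - 1) ∂μ := by
    intro t ht0 ht1
    set c : EuclideanSpace ℝ (Fin n) → ℝ := fun x => (1 - t) * ρ x + t * φ x with hcdef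
    have hc0 : ∀ x, 0 ≤ c x := fun x =>
      add_nonneg (mul_nonneg (by linarith) (hρpos x)) (mul_nonneg ht0.le (hφpos x))
    have hcmeas : Measurable c := (measurable_const.mul hρmeas).add (measurable_const.mul hφmeas)
    have hcadm : ∀ ν ∈ M \ (N₁ ∪ N₂), 1 ≤ ∫⁻ x, ENNReal.ofReal (c x) ∂ν := by
      intro ν hν
      have hν₁ : ν ∈ M \ N₁ := ⟨hν.1, fun h => hν.2 (Or.inl h)⟩
      have hν₂ : ν ∈ M \ N₂ := ⟨hν.1, fun h => hν.2 (Or.inr h)⟩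
      have e : ∫⁻ x, ENNReal.ofReal (c x) ∂ν =
          ENNReal.ofReal (1 - t) * ∫⁻ x, ENNReal.ofReal (ρ x) ∂ν
            + ENNReal.ofReal t * ∫⁻ x, ENNReal.ofReal (φ x) ∂ν := by
        rw [← lintegral_const_mul _ hRmeas, ← lintegral_const_mul _ hPmeas,
          ← lintegral_add_left (hRmeas.const_mul _)]
        exact lintegral_congr fun x => by
          rw [ENNReal.ofReal_add (mul_nonneg (by linarith) (hρpos x))
            (mul_nonneg ht0.le (hφpos x)),
            ENNReal.ofReal_mul (by linarith : (0:ℝ) ≤ 1 - t), ENNReal.ofReal_mul ht0.le]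
      rw [e]
      calc (1 : ℝ≥0∞) = ENNReal.ofReal (1 - t) * 1 + ENNReal.ofReal t * 1 := by
            rw [mul_one, mul_one, ← ENNReal.ofReal_add (by linarith) ht0.le]
            norm_num
        _ ≤ _ := add_le_add (mul_le_mul_right (hρadm ν hν₁) _)
            (mul_le_mul_right (hφadm ν hν₂) _)
    have hmF : modulus p μ M ≤ ∫⁻ x, ENNReal.ofReal (c x) ^ p ∂μ :=
      modulus_le_weak hp hcmeas hc0 hN hcadm
    have hpt : ∀ x, ENNReal.ofReal (1 + t * (p - 1)) * ENNReal.ofReal (c x) ^ p ≤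
        ENNReal.ofReal (1 - t) * ENNReal.ofReal (ρ x) ^ p +
          ENNReal.ofReal (p * t) * (ENNReal.ofReal (φ x) * ENNReal.ofReal (c x) ^ (p - 1)) := by
      intro x
      rw [ENNReal.ofReal_rpow_of_nonneg (hc0 x) hp0.le,
        ENNReal.ofReal_rpow_of_nonneg (hρpos x) hp0.le,
        ENNReal.ofReal_rpow_of_nonneg (hc0 x) hp1,
        ← ENNReal.ofReal_mul (by nlinarith : (0:ℝ) ≤ 1 + t * (p - 1)),
        ← ENNReal.ofReal_mul (by linarith : (0:ℝ) ≤ 1 - t),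
        ← ENNReal.ofReal_mul (hφpos x),
        ← ENNReal.ofReal_mul (by positivity : (0:ℝ) ≤ p * t),
        ← ENNReal.ofReal_add (mul_nonneg (by linarith) (Real.rpow_nonneg (hρpos x) p))
          (mul_nonneg (by positivity) (mul_nonneg (hφpos x) (Real.rpow_nonneg (hc0 x) _)))]
      exact ENNReal.ofReal_le_ofReal (key_pointwise hp ht0 ht1 (hρpos x) (hφpos x))
    have hmeasρp : Measurable fun x => ENNReal.ofReal (ρ x) ^ p := hRmeas.pow_const p
    have hmeascp : Measurable fun x => ENNReal.ofReal (c x) ^ p :=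
      hcmeas.ennreal_ofReal.pow_const p
    have hmeasB : Measurable fun x => ENNReal.ofReal (φ x) * ENNReal.ofReal (c x) ^ (p - 1) :=
      hPmeas.mul (hcmeas.ennreal_ofReal.pow_const _)
    have hint : ENNReal.ofReal (1 + t * (p - 1)) * (∫⁻ x, ENNReal.ofReal (c x) ^ p ∂μ) ≤
        ENNReal.ofReal (1 - t) * (∫⁻ x, ENNReal.ofReal (ρ x) ^ p ∂μ) +
          ENNReal.ofReal (p * t) * (∫⁻ x, ENNReal.ofReal (φ x) *
            ENNReal.ofReal (c x) ^ (p - 1) ∂μ) := by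
      have h := lintegral_mono (μ := μ) hpt
      rwa [lintegral_const_mul _ hmeascp,
        lintegral_add_left (hmeasρp.const_mul _),
        lintegral_const_mul _ hmeasρp, lintegral_const_mul _ hmeasB] at h
    set m := modulus p μ M with hm
    set B := ∫⁻ x, ENNReal.ofReal (φ x) * ENNReal.ofReal (c x) ^ (p - 1) ∂μ with hB
    have h6 : ENNReal.ofReal (1 - t) * m + ENNReal.ofReal (p * t) * m ≤
        ENNReal.ofReal (1 - t) * m + ENNReal.ofReal (p * t) * B := by
      calc ENNReal.ofReal (1 - t) * m + ENNReal.ofReal (p * t) * m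
          = (ENNReal.ofReal (1 - t) + ENNReal.ofReal (p * t)) * m := (add_mul _ _ _).symm
        _ = ENNReal.ofReal (1 + t * (p - 1)) * m := by
            rw [← ENNReal.ofReal_add (by linarith) (by positivity)]
            congr 1
            ring
        _ ≤ ENNReal.ofReal (1 + t * (p - 1)) * (∫⁻ x, ENNReal.ofReal (c x) ^ p ∂μ) :=
            mul_le_mul_right hmF _
        _ ≤ ENNReal.ofReal (1 - t) * m + ENNReal.ofReal (p * t) * B := by
            rw [hρmin]; exact hint
    have h7 : ENNReal.ofReal (p * t) * m ≤ ENNReal.ofReal (p * t) * B :=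
      (ENNReal.add_le_add_iff_left
        (ENNReal.mul_ne_top ENNReal.ofReal_ne_top hfin.ne)).mp h6
    have h8 : m ≤ B :=
      (ENNReal.mul_le_mul_iff_right (ENNReal.ofReal_pos.2 (by positivity)).ne'
        ENNReal.ofReal_ne_top).mp h7
    exact h8
  -- limit along a sequence `t_k → 0`
  set T : ℕ → ℝ := fun k => 1 / (k + 2) with hT
  have hTpos : ∀ k, 0 < T k := fun k => by positivity
  have hTlt : ∀ k, T k < 1 := fun k => by
    rw [hT]
    have : (0:ℝ) ≤ (k : ℝ) := Nat.cast_nonneg k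
    rw [div_lt_one (by positivity)]
    linarith
  have hTtend : Tendsto T atTop (𝓝 0) := by
    have h1 : Tendsto (fun k : ℕ => (k : ℝ) + 2) atTop atTop :=
      tendsto_atTop_add_const_right _ 2 tendsto_natCast_atTop_atTop
    simpa [hT, one_div, Pi.inv_def] using h1.inv_tendsto_atTop
  -- dominated convergence
  have hq : p.HolderConjugate (p / (p - 1)) := Real.HolderConjugate.conjExponent hp
  have hGmeas : Measurable fun x => (ENNReal.ofReal (ρ x) + ENNReal.ofReal (φ x)) ^ (p - 1) :=
    (hRmeas.add hPmeas).pow_const _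
  have hSfin : (∫⁻ x, (ENNReal.ofReal (ρ x) + ENNReal.ofReal (φ x)) ^ p ∂μ) ≠ ⊤ := by
    have hM := ENNReal.lintegral_Lp_add_le (μ := μ)
      (f := fun x => ENNReal.ofReal (ρ x)) (g := fun x => ENNReal.ofReal (φ x))
      hRmeas.aemeasurable hPmeas.aemeasurable hp.le
    simp only [Pi.add_apply] at hM
    intro hcontra
    rw [hcontra, ENNReal.top_rpow_of_pos (by positivity)] at hM
    exact (lt_of_le_of_lt hM (ENNReal.add_lt_top.2
      ⟨ENNReal.rpow_lt_top_of_nonneg (by positivity) hAfin,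
       ENNReal.rpow_lt_top_of_nonneg (by positivity) hΦfin⟩)).ne rfl
  have hboundfin : (∫⁻ x, ENNReal.ofReal (φ x) *
      (ENNReal.ofReal (ρ x) + ENNReal.ofReal (φ x)) ^ (p - 1) ∂μ) ≠ ⊤ := by
    have hH := ENNReal.lintegral_mul_le_Lp_mul_Lq μ hq hPmeas.aemeasurable hGmeas.aemeasurable
    simp only [Pi.mul_apply] at hH
    have hgq : (∫⁻ x, ((ENNReal.ofReal (ρ x) + ENNReal.ofReal (φ x)) ^ (p - 1)) ^ (p / (p - 1)) ∂μ)
        = ∫⁻ x, (ENNReal.ofReal (ρ x) + ENNReal.ofReal (φ x)) ^ p ∂μ :=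
      lintegral_congr fun x => by
        rw [← ENNReal.rpow_mul]
        congr 1
        rw [mul_comm (p - 1), div_mul_cancel₀ _ (by linarith : p - 1 ≠ 0)]
    rw [hgq] at hH
    refine (lt_of_le_of_lt hH ?_).ne
    exact ENNReal.mul_lt_top
      (ENNReal.rpow_lt_top_of_nonneg (by positivity) hΦfin)
      (ENNReal.rpow_lt_top_of_nonneg (by positivity) hSfin)
  have hdom : Tendsto (fun k => ∫⁻ x, ENNReal.ofReal (φ x) *
      ENNReal.ofReal ((1 - T k) * ρ x + T k * φ x) ^ (p - 1) ∂μ) atTop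
      (𝓝 (∫⁻ x, ENNReal.ofReal (φ x) * ENNReal.ofReal (ρ x) ^ (p - 1) ∂μ)) := by
    refine tendsto_lintegral_of_dominated_convergence
      (fun x => ENNReal.ofReal (φ x) * (ENNReal.ofReal (ρ x) + ENNReal.ofReal (φ x)) ^ (p - 1))
      (fun k => hPmeas.mul ((((measurable_const.mul hρmeas).add
        (measurable_const.mul hφmeas)).ennreal_ofReal).pow_const _))
      (fun k => Eventually.of_forall fun x => ?_) hboundfin
      (Eventually.of_forall fun x => ?_)
    · refine mul_le_mul_right (ENNReal.rpow_le_rpow ?_ hp1) _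
      calc ENNReal.ofReal ((1 - T k) * ρ x + T k * φ x)
          ≤ ENNReal.ofReal (ρ x + φ x) := by
            refine ENNReal.ofReal_le_ofReal ?_
            nlinarith [mul_nonneg (hTpos k).le (hρpos x),
              mul_nonneg (by linarith [hTlt k] : (0:ℝ) ≤ 1 - T k) (hφpos x)]
        _ = ENNReal.ofReal (ρ x) + ENNReal.ofReal (φ x) :=
            ENNReal.ofReal_add (hρpos x) (hφpos x)
    · have hc : Tendsto (fun k => (1 - T k) * ρ x + T k * φ x) atTop (𝓝 (ρ x)) := by
        have hcont : Continuous fun s : ℝ => (1 - s) * ρ x + s * φ x := by continuity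
        have h0 : Tendsto (fun k => (1 - T k) * ρ x + T k * φ x) atTop
            (𝓝 ((1 - 0) * ρ x + 0 * φ x)) := (hcont.tendsto 0).comp hTtend
        simpa using h0
      have h2 : Tendsto (fun k => ((1 - T k) * ρ x + T k * φ x) ^ (p - 1)) atTop
          (𝓝 (ρ x ^ (p - 1))) :=
        (Real.continuousAt_rpow_const (ρ x) (p - 1) (Or.inr hp1)).tendsto.comp hc
      have h3 : Tendsto (fun k => ENNReal.ofReal (((1 - T k) * ρ x + T k * φ x) ^ (p - 1)))
          atTop (𝓝 (ENNReal.ofReal (ρ x ^ (p - 1)))) :=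
        (ENNReal.continuous_ofReal.tendsto _).comp h2
      have h4 := ENNReal.Tendsto.const_mul h3 (Or.inr ENNReal.ofReal_ne_top)
        (a := ENNReal.ofReal (φ x))
      have e1 : ∀ k : ℕ, ENNReal.ofReal (φ x) *
          ENNReal.ofReal (((1 - T k) * ρ x + T k * φ x) ^ (p - 1)) =
          ENNReal.ofReal (φ x) * ENNReal.ofReal ((1 - T k) * ρ x + T k * φ x) ^ (p - 1) := by
        intro k
        rw [ENNReal.ofReal_rpow_of_nonneg
          (add_nonneg (mul_nonneg (by linarith [hTlt k]) (hρpos x))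
            (mul_nonneg (hTpos k).le (hφpos x))) hp1]
      have e2 : ENNReal.ofReal (φ x) * ENNReal.ofReal (ρ x ^ (p - 1)) =
          ENNReal.ofReal (φ x) * ENNReal.ofReal (ρ x) ^ (p - 1) := by
        rw [ENNReal.ofReal_rpow_of_nonneg (hρpos x) hp1]
      rw [← e2]
      exact h4.congr fun k => e1 k
  exact ge_of_tendsto' hdom fun k => main (T k) (hTpos k) (hTlt k)
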